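/- Suppose for each element T of a finite collection 𝒯 and v in a space V we have ‖w‖²_{T₁} ≤ C(‖w‖²_{T₂} + ‖[w]_P‖²_P) whenever P = T₁ ∪ T₂ is a patch of two elements, where [w]_P denotes the difference of the polynomial extensions. Then, if every element T₁ with small intersection is paired with a 'fat' element T₂ on which ‖w‖_{T₂} ≤ C'‖w‖_{T₂ ∩ Ω}, summing over a collection of patches with uniformly bounded overlap yields ‖w‖²_{𝒯} ≤ C'' (‖w‖²_Ω + Σ_P ‖[w]_P‖²_P). -/

import Mathlib

theorem stmt_8 {ι W : Type*} (𝒯 : Finset ι)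
    (nT nΩT J : W → ι → ℝ) (nΩ : W → ℝ) (f : ι → ι)
    (C C' K : ℝ) (hC : 0 ≤ C) (hC' : 0 ≤ C') (hK : 0 ≤ K)
    (hnonnegT : ∀ w T, 0 ≤ nT w T) (hnonnegJ : ∀ w T, 0 ≤ J w T)
    (hnonnegΩ : ∀ w, 0 ≤ nΩ w)
    (hlocal : ∀ w, ∀ T ∈ 𝒯, nT w T ≤ C * (nT w (f T) + J w T))
    (hfat : ∀ w, ∀ T ∈ 𝒯, nT w (f T) ≤ C' * nΩT w (f T))
    (hoverlap : ∀ w, ∑ T ∈ 𝒯, nΩT w (f T) ≤ K * nΩ w) :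
    ∃ C'' : ℝ, 0 ≤ C'' ∧ ∀ w, ∑ T ∈ 𝒯, nT w T ≤ C'' * (nΩ w + ∑ T ∈ 𝒯, J w T) := by
  refine ⟨C * (C' * K + 1), by positivity, fun w => ?_⟩
  have h1 : ∑ T ∈ 𝒯, nT w T ≤ C * (∑ T ∈ 𝒯, nT w (f T) + ∑ T ∈ 𝒯, J w T) := by
    rw [← Finset.sum_add_distrib, Finset.mul_sum]
    exact Finset.sum_le_sum (hlocal w)
  have h2 : ∑ T ∈ 𝒯, nT w (f T) ≤ C' * (K * nΩ w) := by
    calc ∑ T ∈ 𝒯, nT w (f T) ≤ ∑ T ∈ 𝒯, C' * nΩT w (f T) :=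
          Finset.sum_le_sum (hfat w)
      _ = C' * ∑ T ∈ 𝒯, nΩT w (f T) := (Finset.mul_sum ..).symm
      _ ≤ C' * (K * nΩ w) := mul_le_mul_of_nonneg_left (hoverlap w) hC'
  have hJ : 0 ≤ ∑ T ∈ 𝒯, J w T := Finset.sum_nonneg fun T _ => hnonnegJ w T
  have hΩ := hnonnegΩ w
  calc ∑ T ∈ 𝒯, nT w T ≤ C * (∑ T ∈ 𝒯, nT w (f T) + ∑ T ∈ 𝒯, J w T) := h1
    _ ≤ C * (C' * K * nΩ w + ∑ T ∈ 𝒯, J w T) := by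
        apply mul_le_mul_of_nonneg_left _ hC
        apply add_le_add_left
        linarith [h2]
    _ ≤ C * (C' * K + 1) * (nΩ w + ∑ T ∈ 𝒯, J w T) := by nlinarith [mul_nonneg hC hΩ, mul_nonneg (mul_nonneg hC (mul_nonneg hC' hK)) hJ]
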